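/- Wedderburn's theorem, constructive form: let F be a field and A a nontrivial finite-dimensional simple F-algebra. If A contains an element that is nonzero and not invertible, then there exist an integer q > 1 and a nontrivial finite-dimensional simple F-algebra B such that A is isomorphic as an F-algebra to the matrix algebra M_q(B). Moreover, if A is central (its center equals F·1), then B can be chosen central as well. -/

import Mathlib

universe u v

open Module MulOpposite

section OpSimple

theorem isSimpleRing_op (R : Type*) [Ring R] [IsSimpleRing R] : IsSimpleRing Rᵐᵒᵖ := by
  apply IsSimpleRing.of_eq_bot_or_eq_top
  intro J
  let I : TwoSidedIdeal R := TwoSidedIdeal.mk' {x : R | op x ∈ J}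
    (by simp)
    (fun hx hy => by simpa using J.add_mem hx hy)
    (fun hx => by simpa using J.neg_mem hx)
    (fun {x y} hy => by simpa [op_mul] using J.mul_mem_right _ _ hy)
    (fun {x y} hx => by simpa [op_mul] using J.mul_mem_left _ _ hx)
  have hmem : ∀ x : R, x ∈ I ↔ op x ∈ J := fun x => TwoSidedIdeal.mem_mk' _ _ _ _ _ _ x
  rcases IsSimpleRing.simple.eq_bot_or_eq_top I with hI | hI
  · left
    ext x
    rw [TwoSidedIdeal.mem_bot]
    constructor
    · intro hx
      have : unop x ∈ I := (hmem _).mpr (by simpa using hx)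
      rw [hI, TwoSidedIdeal.mem_bot] at this
      exact unop_injective (by simpa using this)
    · rintro rfl; exact J.zero_mem
  · right
    ext x
    simp only [TwoSidedIdeal.mem_top, iff_true]
    have : unop x ∈ I := hI ▸ TwoSidedIdeal.mem_top _
    simpa using (hmem _).mp this

end OpSimple

section ModuleLemmas

variable {R : Type v} [Ring R]

/-- right multiplication by `y` as an `R`-linear endomorphism of `R`. -/
private def rmul (y : R) : R →ₗ[R] R := LinearMap.toSpanSingleton R R y

private lemma rmul_apply (y x : R) : rmul y x = x * y := rfl

/-- The image of a simple submodule under right multiplication is `⊥` or isomorphic to it. -/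
private lemma map_rmul_bot_or_equiv (m : Submodule R R) (hm : IsSimpleModule R m) (y : R) :
    Submodule.map (rmul y) m = ⊥ ∨ Nonempty (↥m ≃ₗ[R] ↥(Submodule.map (rmul y) m)) := by
  let g : ↥m →ₗ[R] R := (rmul y) ∘ₗ m.subtype
  have hrange : LinearMap.range g = Submodule.map (rmul y) m := by
    rw [LinearMap.range_comp, Submodule.range_subtype]
  rcases eq_bot_or_eq_top (LinearMap.ker g) with hk | hk
  · right
    have hinj : Function.Injective g := LinearMap.ker_eq_bot.mp hk
    exact ⟨(LinearEquiv.ofInjective g hinj).trans (LinearEquiv.ofEq _ _ hrange)⟩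
  · left
    rw [← hrange, LinearMap.range_eq_bot.mpr (LinearMap.ker_eq_top.mp hk)]

/-- A set of submodules of `R` whose members are carried into the family (or to `⊥`) by every
right multiplication has `sSup` closed under right multiplication. -/
private lemma sSup_mul_mem (𝒮 : Set (Submodule R R))
    (hcl : ∀ m ∈ 𝒮, ∀ y : R, Submodule.map (rmul y) m = ⊥ ∨ Submodule.map (rmul y) m ∈ 𝒮)
    {x : R} (hx : x ∈ sSup 𝒮) (y : R) : x * y ∈ sSup 𝒮 := by
  have hmap : Submodule.map (rmul y) (sSup 𝒮) ≤ sSup 𝒮 := by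
    conv_lhs => rw [sSup_eq_iSup']
    rw [Submodule.map_iSup]
    refine iSup_le fun m => ?_
    rcases hcl m m.2 y with hbot | hmem
    · rw [hbot]; exact bot_le
    · exact le_sSup hmem
  exact hmap ⟨x, hx, rfl⟩

private lemma sSup_eq_top_of_ne_bot [IsSimpleRing R] (𝒮 : Set (Submodule R R))
    (hcl : ∀ m ∈ 𝒮, ∀ y : R, Submodule.map (rmul y) m = ⊥ ∨ Submodule.map (rmul y) m ∈ 𝒮)
    (hne : sSup 𝒮 ≠ ⊥) : sSup 𝒮 = ⊤ := by
  set N := sSup 𝒮 with hN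
  let I : TwoSidedIdeal R := TwoSidedIdeal.mk' (N : Set R)
    N.zero_mem
    (fun hx hy => N.add_mem hx hy)
    (fun hx => N.neg_mem hx)
    (fun {x y} hy => N.smul_mem x hy)
    (fun {x y} hx => sSup_mul_mem 𝒮 hcl hx y)
  have hmem : ∀ x : R, x ∈ I ↔ x ∈ N := fun x => TwoSidedIdeal.mem_mk' _ _ _ _ _ _ x
  have hItop : I = ⊤ := by
    rcases IsSimpleRing.simple.eq_bot_or_eq_top I with hI | hI
    · exfalso
      obtain ⟨x, hxN, hx0⟩ := (Submodule.ne_bot_iff N).mp hne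
      have : x ∈ I := (hmem x).mpr hxN
      rw [hI, TwoSidedIdeal.mem_bot] at this
      exact hx0 this
    · exact hI
  have h1 : (1 : R) ∈ N := (hmem 1).mp (hItop ▸ TwoSidedIdeal.mem_top _)
  refine Submodule.eq_top_iff'.mpr fun x => ?_
  simpa using N.smul_mem x h1

theorem isSemisimpleRing_of_simple_artinian [Nontrivial R] [IsSimpleRing R] [IsArtinian R R] :
    IsSemisimpleRing R := by
  apply IsSemisimpleModule.of_sSup_simples_eq_top
  apply sSup_eq_top_of_ne_bot
  · intro m hm y
    haveI hm' : IsSimpleModule R ↥m := hm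
    rcases map_rmul_bot_or_equiv m hm' y with hbot | he
    · exact Or.inl hbot
    · obtain ⟨e⟩ := he
      haveI := hm'
      exact Or.inr (IsSimpleModule.congr e.symm)
  · obtain ⟨S, hS, -⟩ :=
      (IsAtomic.eq_bot_or_exists_atom_le (⊤ : Submodule R R)).resolve_left top_ne_bot
    intro hbot
    have : S ≤ (⊥ : Submodule R R) := hbot ▸ le_sSup (isSimpleModule_iff_isAtom.mpr hS)
    exact hS.1 (le_bot_iff.mp this)

/-- In a simple semisimple ring, any two simple submodules are isomorphic. -/
theorem simple_submodules_linearEquiv [IsSimpleRing R] [IsSemisimpleRing R]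
    (S T : Submodule R R) (hS : IsSimpleModule R S) (hT : IsSimpleModule R T) :
    Nonempty (↥S ≃ₗ[R] ↥T) := by
  set 𝒮 : Set (Submodule R R) := {m | Nonempty (↥S ≃ₗ[R] ↥m)} with h𝒮
  have hcl : ∀ m ∈ 𝒮, ∀ y : R, Submodule.map (rmul y) m = ⊥ ∨ Submodule.map (rmul y) m ∈ 𝒮 := by
    intro m hmm y
    rw [h𝒮, Set.mem_setOf_eq] at hmm
    obtain ⟨e⟩ := hmm
    have hm : IsSimpleModule R m := IsSimpleModule.congr e.symm
    rcases map_rmul_bot_or_equiv m hm y with hbot | he'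
    · exact Or.inl hbot
    · obtain ⟨e'⟩ := he'
      exact Or.inr ⟨e.trans e'⟩
  have htop : sSup 𝒮 = ⊤ := by
    apply sSup_eq_top_of_ne_bot 𝒮 hcl
    intro hbot
    have hmem : S ∈ 𝒮 := ⟨LinearEquiv.refl R S⟩
    have : S ≤ (⊥ : Submodule R R) := hbot ▸ le_sSup hmem
    have : S = ⊥ := le_bot_iff.mp this
    exact (isSimpleModule_iff_isAtom.mp hS).1 this
  obtain ⟨T', hcompl⟩ := exists_isCompl T
  set π : R →ₗ[R] ↥T := T.projectionOnto T' hcompl with hπ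
  have hexists : ∃ m ∈ 𝒮, ¬ m ≤ LinearMap.ker π := by
    by_contra hall
    push_neg at hall
    have hker : sSup 𝒮 ≤ LinearMap.ker π := sSup_le fun m hm => not_not.mp (not_not_intro (hall m hm))
    have : Nontrivial ↥T := IsSimpleModule.nontrivial R ↥T
    obtain ⟨t, ht0⟩ := exists_ne (0 : ↥T)
    have htker : (t : R) ∈ LinearMap.ker π := hker (htop ▸ Submodule.mem_top)
    rw [LinearMap.mem_ker] at htker
    rw [hπ, Submodule.projectionOnto_apply_left hcompl t] at htker
    exact ht0 htker
  obtain ⟨m, hm𝒮, hmker⟩ := hexists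
  rw [h𝒮, Set.mem_setOf_eq] at hm𝒮
  obtain ⟨e⟩ := hm𝒮
  have hm : IsSimpleModule R m := IsSimpleModule.congr e.symm
  let g : ↥m →ₗ[R] ↥T := π ∘ₗ m.subtype
  have hg : g ≠ 0 := by
    intro h0
    apply hmker
    intro x hx
    have : g ⟨x, hx⟩ = 0 := by rw [h0]; rfl
    simpa [g, LinearMap.mem_ker] using this
  exact ⟨e.trans (LinearEquiv.ofBijective g (g.bijective_of_ne_zero hg))⟩

/-- Decomposition of a simple Artinian ring as a finite power of a simple module. -/
theorem exists_linearEquiv_fun_simple (R : Type v) [Ring R] [Nontrivial R] [IsSimpleRing R]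
    [IsArtinian R R] :
    ∃ (q : ℕ) (S : Submodule R R), 0 < q ∧ IsSimpleModule R ↥S ∧
      Nonempty (R ≃ₗ[R] (Fin q → ↥S)) := by
  have hss : IsSemisimpleRing R := isSemisimpleRing_of_simple_artinian
  obtain ⟨s, hsfin, hindep, hsup, hsimple⟩ :=
    ((IsSemisimpleModule.finite_tfae (R := R) (M := R)).out 0 4).mp (Module.Finite.self R)
  letI : Fintype ↥s := hsfin.fintype
  letI : DecidableEq ↥s := Classical.decEq _
  have hsne : s.Nonempty := by
    rcases Set.eq_empty_or_nonempty s with rfl | hne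
    · exfalso; rw [sSup_empty] at hsup; exact top_ne_bot hsup.symm
    · exact hne
  obtain ⟨S, hSs⟩ := hsne
  have hSsimple : IsSimpleModule R ↥S := hsimple S hSs
  have hinternal : DirectSum.IsInternal (fun i : ↥s => (i : Submodule R R)) := by
    apply DirectSum.isInternal_submodule_of_iSupIndep_of_iSup_eq_top
    · exact (sSupIndep_iff s).mp hindep
    · rw [← sSup_eq_iSup']; exact hsup
  let e1 := LinearEquiv.ofBijective
    (DirectSum.coeLinearMap (fun i : ↥s => (i : Submodule R R))) hinternal
  let e2 := DirectSum.linearEquivFunOnFintype R ↥s (fun i : ↥s => ↥(i : Submodule R R))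
  have isos : ∀ i : ↥s, Nonempty (↥(i : Submodule R R) ≃ₗ[R] ↥S) := fun i =>
    simple_submodules_linearEquiv _ _ (hsimple i i.2) hSsimple
  let e3 : ((i : ↥s) → ↥(i : Submodule R R)) ≃ₗ[R] ((_ : ↥s) → ↥S) :=
    LinearEquiv.piCongrRight fun i => (isos i).some
  let e4 : ((_ : ↥s) → ↥S) ≃ₗ[R] (Fin (Fintype.card ↥s) → ↥S) :=
    (LinearEquiv.piCongrLeft R (fun _ : ↥s => ↥S) (Fintype.equivFin ↥s).symm).symm
  refine ⟨Fintype.card ↥s, S, Fintype.card_pos_iff.mpr ⟨⟨S, hSs⟩⟩, hSsimple,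
    ⟨e1.symm.trans (e2.trans (e3.trans e4))⟩⟩

end ModuleLemmas

section EndEquiv

variable {R M N : Type*} [Ring R] [AddCommGroup M] [AddCommGroup N] [Module R M] [Module R N]

/-- Conjugation of endomorphism rings by a linear equivalence, as a ring equivalence. -/
def endRingCongr (e : M ≃ₗ[R] N) : Module.End R M ≃+* Module.End R N where
  toFun f := (e : M →ₗ[R] N) ∘ₗ f ∘ₗ (e.symm : N →ₗ[R] M)
  invFun g := (e.symm : N →ₗ[R] M) ∘ₗ g ∘ₗ (e : M →ₗ[R] N)
  left_inv f := by ext x; simp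
  right_inv g := by ext x; simp
  map_add' f g := by ext x; simp
  map_mul' f g := by ext x; simp [Module.End.mul_apply]

/-- `End(M^n) ≃ Mₙ(End M)` as rings. -/
def endPiRingEquivMatrix (R M : Type*) [Ring R] [AddCommGroup M] [Module R M] (n : ℕ) :
    Module.End R (Fin n → M) ≃+* Matrix (Fin n) (Fin n) (Module.End R M) where
  toFun f := Matrix.of fun i j =>
    LinearMap.proj i ∘ₗ f ∘ₗ LinearMap.single R (fun _ : Fin n => M) j
  invFun g := ∑ i, ∑ j, LinearMap.single R (fun _ : Fin n => M) i ∘ₗ g i j ∘ₗ LinearMap.proj j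
  left_inv f := by
    refine LinearMap.ext fun x => funext fun k => ?_
    simp only [LinearMap.sum_apply, LinearMap.coe_comp, Function.comp_apply,
      LinearMap.proj_apply, LinearMap.coe_single, Matrix.of_apply, Finset.sum_apply,
      Pi.single_apply]
    rw [Finset.sum_comm]
    have : ∀ j, (∑ i, if k = i then f (Pi.single j (x j)) i else 0) = f (Pi.single j (x j)) k := by
      intro j
      simp [Finset.sum_ite_eq]
    simp only [this]
    rw [← Finset.sum_apply k, ← map_sum, Finset.univ_sum_single]
  right_inv g := by
    refine Matrix.ext fun i j => LinearMap.ext fun x => ?_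
    simp only [Matrix.of_apply, LinearMap.coe_comp, Function.comp_apply, LinearMap.coe_single,
      LinearMap.proj_apply, LinearMap.sum_apply, Finset.sum_apply, Pi.single_apply]
    have hkl : ∀ k l : Fin n,
        (if i = k then (g k l) (if l = j then x else 0) else 0)
          = if k = i then (if l = j then (g i j) x else 0) else 0 := by
      intro k l
      rcases eq_or_ne k i with rfl | hk
      · rcases eq_or_ne l j with rfl | hl
        · simp
        · simp [hl]
      · simp [hk, Ne.symm hk]
    simp only [hkl]
    simp [Finset.sum_ite_eq]
  map_add' f g := by
    refine Matrix.ext fun i j => LinearMap.ext fun x => ?_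
    simp only [Matrix.of_apply, Matrix.add_apply, LinearMap.add_apply, Pi.add_apply,
      LinearMap.coe_comp, Function.comp_apply, LinearMap.coe_single, LinearMap.proj_apply]
  map_mul' f g := by
    refine Matrix.ext fun i j => LinearMap.ext fun x => ?_
    simp only [Matrix.of_apply, Module.End.mul_apply, LinearMap.coe_comp, Function.comp_apply,
      LinearMap.coe_single, LinearMap.proj_apply, Matrix.mul_apply, LinearMap.sum_apply]
    have h1 : (∑ k, f (Pi.single (M := fun _ : Fin n => M) k ((g (Pi.single j x)) k)) i)
        = (∑ k, f (Pi.single (M := fun _ : Fin n => M) k ((g (Pi.single j x)) k))) i :=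
      (Finset.sum_apply _ _ _).symm
    rw [h1, ← map_sum, Finset.univ_sum_single]

end EndEquiv


/-- An opaque copy of a type, used to control instance resolution. -/
def WedderburnWrap (X : Type v) : Type v := X

/-- Convert out of the wrapper. -/
def WedderburnWrap.un {X : Type v} (x : WedderburnWrap X) : X := x

/-- The ring structure carried over to the wrapper. -/
def WedderburnWrap.ringOf (X : Type v) [Ring X] : Ring (WedderburnWrap X) := inferInstanceAs (Ring X)

set_option maxHeartbeats 800000 in
theorem isSimpleRing_end (R M : Type*) [Ring R] [AddCommGroup M] [Module R M]
    [IsSimpleModule R M] : IsSimpleRing (Module.End R M) := by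
  letI := Classical.decEq (Module.End R M)
  letI ddr : DivisionRing (Module.End R M) := Module.End.instDivisionRing
  exact DivisionRing.isSimpleRing _

theorem nontrivial_end (R M : Type*) [Ring R] [AddCommGroup M] [Module R M]
    [Nontrivial M] : Nontrivial (Module.End R M) := by
  obtain ⟨m, hm⟩ := exists_ne (0 : M)
  exact ⟨0, 1, fun h => hm (by simpa using (congrFun (congrArg DFunLike.coe h) m).symm)⟩

set_option maxHeartbeats 1600000 in
set_option synthInstance.maxHeartbeats 400000 in
/-- Wedderburn's theorem, constructive form: if a nontrivial finite-dimensional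
simple `F`-algebra `A` contains a nonzero noninvertible element, then
`A ≅ M_q(B)` for some `q > 1` and some nontrivial finite-dimensional simple
`F`-algebra `B`; moreover, if `A` is central then `B` may be chosen central. -/
theorem wedderburn_constructive
    (F : Type u) (A : Type v) [Field F] [Ring A] [Algebra F A]
    [FiniteDimensional F A] [Nontrivial A] [IsSimpleRing A]
    (h : ∃ a : A, a ≠ 0 ∧ ¬ IsUnit a) :
    ∃ (q : ℕ) (B : Type v) (_ : Ring B) (_ : Algebra F B),
      1 < q ∧ Nontrivial B ∧ FiniteDimensional F B ∧ IsSimpleRing B ∧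
      Nonempty (A ≃ₐ[F] Matrix (Fin q) (Fin q) B) ∧
      (Algebra.IsCentral F A → Algebra.IsCentral F B) := by
  obtain ⟨a, ha0, hau⟩ := h
  haveI : IsSimpleRing Aᵐᵒᵖ := isSimpleRing_op A
  haveI : FiniteDimensional F Aᵐᵒᵖ := inferInstance
  haveI : IsArtinian Aᵐᵒᵖ Aᵐᵒᵖ := isArtinian_of_tower F inferInstance
  obtain ⟨q, S, hq0, hSsimple, ⟨e⟩⟩ := exists_linearEquiv_fun_simple Aᵐᵒᵖ
  set D := Module.End Aᵐᵒᵖ ↥S with hD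
  let E : A ≃+* Matrix (Fin q) (Fin q) D :=
    ((RingEquiv.opOp A).trans (RingEquiv.moduleEndSelf Aᵐᵒᵖ)).trans
      ((endRingCongr e).trans (endPiRingEquivMatrix Aᵐᵒᵖ ↥S q))
  -- q ≠ 1
  have hq1 : q ≠ 1 := by
    rintro rfl
    apply hau
    haveI : IsSimpleModule Aᵐᵒᵖ Aᵐᵒᵖ :=
      IsSimpleModule.congr (e.trans (LinearEquiv.funUnique (Fin 1) Aᵐᵒᵖ ↥S))
    have hspan : Submodule.span Aᵐᵒᵖ {op a} = ⊤ := by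
      rcases eq_bot_or_eq_top (Submodule.span Aᵐᵒᵖ {op a}) with hb | ht
      · exfalso
        rw [Submodule.span_singleton_eq_bot] at hb
        exact ha0 (by simpa using congrArg unop hb)
      · exact ht
    have h1mem : (1 : Aᵐᵒᵖ) ∈ Submodule.span Aᵐᵒᵖ {op a} := hspan ▸ Submodule.mem_top
    obtain ⟨r, hr⟩ := Submodule.mem_span_singleton.mp h1mem
    have hab : a * unop r = 1 := by
      have : op (a * unop r) = op (1 : A) := by
        simpa [smul_eq_mul, op_mul] using hr
      exact op_injective this
    set b := unop r with hb
    -- upgrade the right inverse to a two-sided inverse using finite dimensionality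
    have hsurj : Function.Surjective (LinearMap.mulLeft F a) := fun x =>
      ⟨b * x, by simp [LinearMap.mulLeft_apply, ← mul_assoc, hab]⟩
    have hinj : Function.Injective (LinearMap.mulLeft F a) :=
      LinearMap.injective_iff_surjective.mpr hsurj
    have hba : b * a = 1 := by
      have hz : a * (b * a - 1) = 0 := by
        rw [mul_sub, ← mul_assoc, hab, one_mul, mul_one, sub_self]
      have := hinj (a₁ := b * a - 1) (a₂ := 0) (by simpa [LinearMap.mulLeft_apply] using hz)
      linear_combination (norm := noncomm_ring) this
    exact ⟨⟨a, b, hab, hba⟩, rfl⟩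
  have hq : 1 < q := lt_of_le_of_ne hq0 (Ne.symm hq1)
  haveI : NeZero q := ⟨by omega⟩
  let i0 : Fin q := ⟨0, by omega⟩
  -- central matrices are scalar
  have central_scalar : ∀ Mx : Matrix (Fin q) (Fin q) D, (∀ N, N * Mx = Mx * N) →
      Mx = Matrix.scalar (Fin q) (Mx i0 i0) := by
    intro Mx hMx
    ext i j
    rw [Matrix.scalar_apply, Matrix.diagonal_apply]
    rcases eq_or_ne i j with rfl | hij
    · -- M i i = M i0 i0, via commuting with stdBasisMatrix i i0 1
      have := congrFun (congrFun (hMx (Matrix.single i i0 1)) i) i0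
      rw [Matrix.single_mul_apply_same, Matrix.mul_single_apply_same,
        one_mul, mul_one] at this
      simp [this]
    · -- M i j = 0 via commuting with stdBasisMatrix j j 1
      have := congrFun (congrFun (hMx (Matrix.single j j 1)) i) j
      rw [Matrix.single_mul_apply_of_ne _ _ _ _ _ hij,
        Matrix.mul_single_apply_same, mul_one] at this
      simp [hij, ← this]
  -- the image of `algebraMap F A` consists of scalar matrices with central entries
  have hcentA : ∀ c : F, ∀ N, N * E (algebraMap F A c) = E (algebraMap F A c) * N := by
    intro c N
    have h1 : E (E.symm N * algebraMap F A c) = N * E (algebraMap F A c) := by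
      rw [map_mul, E.apply_symm_apply]
    have h2 : E (algebraMap F A c * E.symm N) = E (algebraMap F A c) * N := by
      rw [map_mul, E.apply_symm_apply]
    rw [← h1, ← h2, Algebra.commutes]
  set d : F → D := fun c => E (algebraMap F A c) i0 i0 with hd
  have hscal : ∀ c : F, E (algebraMap F A c) = Matrix.scalar (Fin q) (d c) := fun c =>
    central_scalar _ (hcentA c)
  have hdcomm : ∀ (c : F) (x : D), d c * x = x * d c := by
    intro c x
    have := congrFun (congrFun ((hcentA c (Matrix.scalar (Fin q) x)).symm) i0) i0
    rw [hscal c] at this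
    simpa [Matrix.scalar_apply, Matrix.diagonal_mul, Matrix.mul_diagonal] using this
  have hdiag : ∀ x : D, Matrix.scalar (Fin q) x i0 i0 = x := fun x => by
    simp [Matrix.scalar_apply]
  let φ : F →+* D :=
    { toFun := d
      map_one' := by
        show E (algebraMap F A 1) i0 i0 = 1
        rw [map_one, map_one]
        exact Matrix.one_apply_eq i0
      map_mul' := fun c₁ c₂ => by
        have hmm : E (algebraMap F A (c₁ * c₂)) = Matrix.scalar (Fin q) (d c₁ * d c₂) := by
          rw [map_mul, map_mul, hscal c₁, hscal c₂, ← map_mul (Matrix.scalar (Fin q))]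
        show E (algebraMap F A (c₁ * c₂)) i0 i0 = d c₁ * d c₂
        rw [hmm, hdiag]
      map_zero' := by
        show E (algebraMap F A 0) i0 i0 = 0
        rw [map_zero, map_zero]
        rfl
      map_add' := fun c₁ c₂ => by
        show E (algebraMap F A (c₁ + c₂)) i0 i0 = d c₁ + d c₂
        rw [map_add, map_add, Matrix.add_apply] }
  letI algD : Algebra F D := φ.toAlgebra' hdcomm
  have halgD : ∀ c : F, algebraMap F D c = d c := fun _ => rfl
  have halgM : ∀ c : F, algebraMap F (Matrix (Fin q) (Fin q) D) c = Matrix.scalar (Fin q) (d c) := by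
    intro c
    rw [Matrix.algebraMap_eq_diagonal, Matrix.scalar_apply]
    congr 1
  let EA : A ≃ₐ[F] Matrix (Fin q) (Fin q) D :=
    AlgEquiv.ofRingEquiv (f := E) fun c => (hscal c).trans (halgM c).symm
  have hstd : ∀ (dd x : D), Matrix.scalar (Fin q) dd * Matrix.single i0 i0 x
      = Matrix.single i0 i0 (dd * x) := by
    intro dd x
    ext i j
    simp [Matrix.scalar_apply, Matrix.diagonal_mul, Matrix.single, mul_ite]
  have hEsymm : ∀ c : F, E.symm (Matrix.scalar (Fin q) (d c)) = algebraMap F A c := by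
    intro c
    apply E.injective
    rw [E.apply_symm_apply, hscal]
  letI rW : Ring (WedderburnWrap D) := WedderburnWrap.ringOf D
  letI aW : Algebra F (WedderburnWrap D) := algD
  haveI hfinD : FiniteDimensional F (WedderburnWrap D) := by
    let ψ : WedderburnWrap D →ₗ[F] A :=
      { toFun := fun x => E.symm (Matrix.single i0 i0 x.un)
        map_add' := fun x y => by
          rw [show (x + y).un = x.un + y.un from rfl, Matrix.single_add, map_add]
        map_smul' := fun c x => by
          dsimp only [RingHom.id_apply]
          show E.symm (Matrix.single i0 i0 (d c * x.un))
            = c • E.symm (Matrix.single i0 i0 x.un)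
          rw [← hstd, map_mul, hEsymm, ← Algebra.smul_def] }
    have hψ : Function.Injective ψ := by
      intro x y hxy
      have h2 : Matrix.single i0 i0 x.un = Matrix.single i0 i0 y.un :=
        E.symm.injective hxy
      have := congrFun (congrFun (congrArg (fun m => (m : Matrix (Fin q) (Fin q) D)) h2) i0) i0
      exact (by simpa [Matrix.single_apply_same] using this : x.un = y.un)
    exact FiniteDimensional.of_injective ψ hψ
  haveI hsimpD : IsSimpleRing (WedderburnWrap D) := isSimpleRing_end Aᵐᵒᵖ ↥S
  haveI : Nontrivial ↥S := IsSimpleModule.nontrivial Aᵐᵒᵖ ↥S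
  haveI hntD : Nontrivial (WedderburnWrap D) := nontrivial_end Aᵐᵒᵖ ↥S
  let EA' : A ≃ₐ[F] Matrix (Fin q) (Fin q) (WedderburnWrap D) := EA
  refine ⟨q, WedderburnWrap D, rW, aW, hq, hntD, hfinD, hsimpD, ⟨EA'⟩, ?_⟩
  intro hA
  constructor
  intro x hx
  have hxc : ∀ y : D, y * x.un = x.un * y := fun y =>
    Subalgebra.mem_center_iff.mp hx y
  have hcentM : ∀ N : Matrix (Fin q) (Fin q) D,
      N * Matrix.scalar (Fin q) x.un = Matrix.scalar (Fin q) x.un * N := by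
    intro N
    ext i j
    rw [Matrix.scalar_apply, Matrix.mul_diagonal, Matrix.diagonal_mul, hxc]
  have hmemA : E.symm (Matrix.scalar (Fin q) x.un) ∈ Subalgebra.center F A := by
    rw [Subalgebra.mem_center_iff]
    intro b
    apply E.injective
    rw [map_mul, map_mul, E.apply_symm_apply]
    exact hcentM (E b)
  obtain ⟨c, hc⟩ := Algebra.mem_bot.mp (hA.out hmemA)
  refine Algebra.mem_bot.mpr ⟨c, ?_⟩
  have hEx : E (algebraMap F A c) = Matrix.scalar (Fin q) x.un := by
    rw [hc, E.apply_symm_apply]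
  show algebraMap F (WedderburnWrap D) c = x
  have h3 := (hscal c).symm.trans hEx
  have h4 := congrFun (congrFun (congrArg (fun m => (m : Matrix (Fin q) (Fin q) D)) h3) i0) i0
  have h5 : d c = x.un := by simpa [hdiag] using h4
  exact h5
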